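/- Let M ⊆ S¹ be a symmetric Cantorval, with canonical decomposition M = 𝓘 ∪ K ∪ N. Then N = ∅. -/

import Mathlib

open Set Topology Filter

/-- The circle. -/
abbrev S1 := AddCircle (1 : ℝ)

/-- Apply a word `l = [i₁, …, i_k]` of generators: `f i₁ ∘ ⋯ ∘ f i_k`. -/
def applyWord {X : Type*} {n : ℕ} (f : Fin n → X → X) (l : List (Fin n)) (x : X) : X :=
  l.foldr (fun i y => f i y) x

/-- The orbit of `x` under the semigroup `IFS(f₁,…,fₙ)` (nonempty words). -/
def orbitIFS {X : Type*} {n : ℕ} (f : Fin n → X → X) (x : X) : Set X :=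
  {y | ∃ l : List (Fin n), l ≠ [] ∧ y = applyWord f l x}

/-- `M` is a minimal set for the IFS generated by `f₁,…,fₙ`. -/
def IsMinimalIFS {X : Type*} [TopologicalSpace X] {n : ℕ} (f : Fin n → X → X)
    (M : Set X) : Prop :=
  M.Nonempty ∧ IsClosed M ∧ (∀ i, f i '' M ⊆ M) ∧
    ∀ x ∈ M, closure (orbitIFS f x) = M

/-- A Cantor set: nonempty, compact, perfect and totally disconnected. -/
def IsCantorSet {X : Type*} [TopologicalSpace X] (K : Set X) : Prop :=
  K.Nonempty ∧ IsCompact K ∧ Perfect K ∧ IsTotallyDisconnected K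

/-- `X` is (homeomorphic to) the circle or a (nondegenerate) closed interval. -/
def IsCircleOrInterval (X : Type*) [TopologicalSpace X] : Prop :=
  Nonempty (X ≃ₜ S1) ∨ ∃ a b : ℝ, a < b ∧ Nonempty (X ≃ₜ Set.Icc a b)

/-- The canonical decomposition `M = 𝓘 ∪ K ∪ N` of a closed set:
`𝓘` is the interior (union of components of the interior), `K` is the maximal
Cantor set contained in `M \ 𝓘` (possibly empty), and `N` is the countable remainder. -/
def IsCanonicalDecomp {X : Type*} [TopologicalSpace X] (M I K N : Set X) : Prop :=
  I = interior M ∧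
  (IsCantorSet K ∨ K = ∅) ∧
  K ⊆ M \ I ∧
  (∀ K₁ : Set X, IsCantorSet K₁ → K ⊆ K₁ → K₁ ⊆ M \ I → K₁ = K) ∧
  N = M \ (I ∪ K) ∧
  N.Countable

/-- A symmetric Cantorval: a nonempty compact set which is the closure of its interior,
and such that both endpoints of every nontrivial connected component are accumulation
points of one-point connected components. -/
def IsSymmetricCantorval {X : Type*} [TopologicalSpace X] (M : Set X) : Prop :=
  M.Nonempty ∧ IsCompact M ∧ M = closure (interior M) ∧
  ∀ x ∈ M, ¬ (connectedComponentIn M x).Subsingleton →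
    ∀ z ∈ frontier (connectedComponentIn M x),
      AccPt z (𝓟 {y | y ∈ M ∧ connectedComponentIn M y = {y}})

namespace Stmt5Aux

lemma continuous_coe : Continuous (fun r : ℝ => (r : S1)) :=
  AddCircle.continuous_mk' 1

lemma dist_coe_le (s t : ℝ) : dist (s : S1) (t : S1) ≤ |s - t| := by
  rw [dist_eq_norm, ← QuotientAddGroup.mk_sub]
  simpa [Real.norm_eq_abs] using
    QuotientAddGroup.norm_mk_le_norm (S := AddSubgroup.zmultiples (1 : ℝ)) (m := s - t)

lemma exists_lift_eq_dist (z x : S1) (zt : ℝ) (hz : (zt : S1) = z) :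
    ∃ t : ℝ, (t : S1) = x ∧ |zt - t| = dist z x := by
  obtain ⟨v, hv⟩ := QuotientAddGroup.mk_surjective (z - x)
  set u := v - round ((1 : ℝ)⁻¹ * v) * 1 with hu
  have hnorm : ‖(v : S1)‖ = |u| := AddCircle.norm_eq (p := 1)
  have huv : (u : S1) = (v : S1) := by
    rw [QuotientAddGroup.eq_iff_sub_mem]
    refine AddSubgroup.mem_zmultiples_iff.mpr ⟨-round ((1 : ℝ)⁻¹ * v), ?_⟩
    rw [zsmul_eq_mul]
    push_cast
    rw [hu]; ring
  refine ⟨zt - u, ?_, ?_⟩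
  · have h1 : ((zt - u : ℝ) : S1) = (zt : S1) - (u : S1) := QuotientAddGroup.mk_sub _ _ _
    rw [h1, huv, hv, hz]
    abel
  · rw [dist_eq_norm, ← hv, hnorm]
    congr 1
    ring

lemma abs_sub_le_of_uIcc {a b s : ℝ} (hs : s ∈ uIcc a b) : |s - a| ≤ |b - a| := by
  have h1 := le_abs_self (b - a)
  have h2 := neg_abs_le (b - a)
  rcases mem_uIcc.mp hs with ⟨ha, hb⟩ | ⟨hb, ha⟩ <;> rw [abs_le] <;> constructor <;> linarith

lemma preconn_inter_frontier {X : Type*} [TopologicalSpace X] {A C : Set X}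
    (hA : IsPreconnected A) (h1 : (A ∩ C).Nonempty) (h2 : (A \ C).Nonempty) :
    (A ∩ frontier C).Nonempty := by
  by_contra h
  rw [not_nonempty_iff_eq_empty] at h
  have hfr : ∀ y ∈ A, y ∉ frontier C := by
    intro y hy hyf
    exact absurd (Set.mem_inter hy hyf) (by rw [h]; exact notMem_empty y)
  have hsub : A ⊆ interior C ∪ (closure C)ᶜ := by
    intro y hy
    by_cases hc : y ∈ closure C
    · left
      by_contra hint
      exact hfr y hy ⟨hc, hint⟩
    · right; exact hc
  obtain ⟨x, hxA, hxC⟩ := h1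
  obtain ⟨z, hzA, hzC⟩ := h2
  have hxint : x ∈ interior C := by
    by_contra hint
    exact hfr x hxA ⟨subset_closure hxC, hint⟩
  have hzcl : z ∉ closure C := by
    intro hc
    by_cases hint : z ∈ interior C
    · exact hzC (interior_subset hint)
    · exact hfr z hzA ⟨hc, hint⟩
  obtain ⟨y, _, hy1, hy2⟩ := hA (interior C) (closure C)ᶜ isOpen_interior
    isClosed_closure.isOpen_compl hsub ⟨x, hxA, hxint⟩ ⟨z, hzA, hzcl⟩
  exact hy2 (subset_closure (interior_subset hy1))

lemma totallyDisconnected_of_interior_empty {F : Set S1} (hF : interior F = ∅) :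
    IsTotallyDisconnected F := by
  intro t hts htc
  by_contra hsub
  rw [Set.not_subsingleton_iff] at hsub
  obtain ⟨a, ha, b, hb, hab⟩ := hsub
  obtain ⟨p, hp⟩ : ∃ p, p ∉ t := by
    by_contra hcon
    push_neg at hcon
    have h1 : interior t ⊆ interior F := interior_mono hts
    rw [Set.eq_univ_of_forall hcon, interior_univ, hF] at h1
    exact (h1 (mem_univ a)).elim
  obtain ⟨a₀, rfl⟩ := QuotientAddGroup.mk_surjective p
  set e := AddCircle.equivIco 1 a₀ with he
  set g : S1 → ℝ := fun x => (e x : ℝ) with hg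
  have hcoe_g : ∀ x, ((g x : ℝ) : S1) = x := fun x => e.symm_apply_apply x
  have hcont : ContinuousOn g t := by
    intro x hx
    have hxa : x ≠ ((a₀ : ℝ) : S1) := fun hcontra => hp (hcontra ▸ hx)
    exact ((continuous_subtype_val.continuousAt).comp
      (AddCircle.continuousAt_equivIco 1 a₀ hxa)).continuousWithinAt
  have himg : IsPreconnected (g '' t) := htc.image g hcont
  have hkey : ∀ u v : S1, u ∈ t → v ∈ t → g u < g v → False := by
    intro u v hu hv huv
    have hIcc : Icc (g u) (g v) ⊆ g '' t :=
      himg.Icc_subset ⟨u, hu, rfl⟩ ⟨v, hv, rfl⟩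
    set W : Set S1 := (fun r : ℝ => (r : S1)) '' Ioo (g u) (g v) with hW
    have hWt : W ⊆ t := by
      rintro _ ⟨s, hs, rfl⟩
      obtain ⟨x, hx, hgx⟩ := hIcc (Ioo_subset_Icc_self hs)
      have h2 : (s : S1) = x := by rw [← hgx]; exact hcoe_g x
      show (s : S1) ∈ t
      rw [h2]; exact hx
    have hWopen : IsOpen W := QuotientAddGroup.isOpenMap_coe _ isOpen_Ioo
    have hWne : W.Nonempty :=
      ⟨_, ⟨(g u + g v) / 2, ⟨by linarith, by linarith⟩, rfl⟩⟩
    obtain ⟨w, hw⟩ := hWne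
    have h1 : w ∈ interior F :=
      interior_mono hts (hWopen.subset_interior_iff.mpr hWt hw)
    rw [hF] at h1
    exact h1.elim
  have hgab : g a ≠ g b := by
    intro h
    apply hab
    rw [← hcoe_g a, ← hcoe_g b, h]
  rcases hgab.lt_or_gt with h | h
  · exact hkey a b ha hb h
  · exact hkey b a hb ha h

end Stmt5Aux

open Stmt5Aux

theorem stmt5 (M I K N : Set S1) (hM : IsSymmetricCantorval M)
    (hd : IsCanonicalDecomp M I K N) : N = ∅ := by
  obtain ⟨hMne, hMcomp, hMclos, hacc⟩ := hM
  obtain ⟨hI, hKc, hKMI, hmax, hN, -⟩ := hd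
  subst hI; subst hN
  have hMclosed : IsClosed M := hMcomp.isClosed
  set F : Set S1 := M \ interior M with hF
  have hFclosed : IsClosed F := hMclosed.sdiff isOpen_interior
  have hintF : interior F = ∅ := by
    have hFfr : F = frontier (interior M) := by
      rw [isOpen_interior.frontier_eq, hF, ← hMclos]
    rw [hFfr, ← frontier_compl]
    exact interior_frontier (isClosed_compl_iff.mpr isOpen_interior)
  by_cases hFem : F = ∅
  · apply eq_empty_of_subset_empty
    intro x hx
    have hxF : x ∈ F := ⟨hx.1, fun h => hx.2 (Or.inl h)⟩
    rw [hFem] at hxF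
    exact hxF
  -- F nonempty, show F is a Cantor set and conclude
  have hcompClosed : ∀ x, x ∈ M → IsClosed (connectedComponentIn M x) := by
    intro x hx
    refine isClosed_of_closure_subset ?_
    exact (isPreconnected_connectedComponentIn.closure).subset_connectedComponentIn
      (subset_closure (mem_connectedComponentIn hx))
      (closure_minimal (connectedComponentIn_subset M x) hMclosed)
  have hIntNontriv : ∀ y ∈ interior M, ¬ (connectedComponentIn M y).Subsingleton := by
    intro y hy hsub
    obtain ⟨yt, rfl⟩ := QuotientAddGroup.mk_surjective y
    obtain ⟨ε, hε, hball⟩ := Metric.isOpen_iff.mp isOpen_interior _ hy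
    set δ := min ε 1 / 2 with hδ
    have hδ0 : 0 < δ := by
      have := lt_min hε one_pos
      positivity
    have hδε : δ < ε := by
      have h1 : min ε 1 ≤ ε := min_le_left _ _
      rw [hδ]; linarith
    have hδ1 : δ < 1 := by
      have h1 : min ε 1 ≤ 1 := min_le_right _ _
      rw [hδ]; linarith
    set A : Set S1 := (fun r : ℝ => (r : S1)) '' Icc yt (yt + δ) with hA
    have hAconn : IsPreconnected A := isPreconnected_Icc.image _ continuous_coe.continuousOn
    have hAM : A ⊆ M := by
      rintro _ ⟨s, hs, rfl⟩
      refine interior_subset (hball ?_)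
      rw [Metric.mem_ball]
      calc dist (s : S1) ((yt : ℝ) : S1) ≤ |s - yt| := dist_coe_le s yt
        _ < ε := by rw [abs_of_nonneg (by linarith [hs.1])]; linarith [hs.2]
    have hyA : ((yt : ℝ) : S1) ∈ A := ⟨yt, ⟨le_refl _, by linarith⟩, rfl⟩
    have hy'A : ((yt + δ : ℝ) : S1) ∈ A := ⟨yt + δ, ⟨by linarith, le_refl _⟩, rfl⟩
    have hAcomp : A ⊆ connectedComponentIn M ((yt : ℝ) : S1) :=
      hAconn.subset_connectedComponentIn hyA hAM
    have h1 : ((yt + δ : ℝ) : S1) = ((yt : ℝ) : S1) := hsub (hAcomp hy'A) (hAcomp hyA)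
    rw [AddCircle.coe_eq_coe_iff_of_mem_Ico (a := yt)
      ⟨by linarith, by linarith⟩ ⟨le_refl _, by linarith⟩] at h1
    linarith [congrArg id h1, (by linarith : yt + δ ≠ yt) h1]
  have hSsubF : {y : S1 | y ∈ M ∧ connectedComponentIn M y = {y}} ⊆ F := by
    intro y hy
    refine ⟨hy.1, fun hyint => ?_⟩
    exact hIntNontriv y hyint (hy.2 ▸ subsingleton_singleton)
  have hFrontCF : ∀ x ∈ M, frontier (connectedComponentIn M x) ⊆ F := by
    intro x hx y hyf
    have hyC : y ∈ connectedComponentIn M x := by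
      rw [← (hcompClosed x hx).closure_eq]; exact hyf.1
    refine ⟨connectedComponentIn_subset M x hyC, fun hyint => ?_⟩
    obtain ⟨yt, rfl⟩ := QuotientAddGroup.mk_surjective y
    obtain ⟨ε, hε, hball⟩ := Metric.isOpen_iff.mp isOpen_interior _ hyint
    set A : Set S1 := (fun r : ℝ => (r : S1)) '' Ioo (yt - ε) (yt + ε) with hA
    have hAopen : IsOpen A := QuotientAddGroup.isOpenMap_coe _ isOpen_Ioo
    have hAconn : IsPreconnected A := isPreconnected_Ioo.image _ continuous_coe.continuousOn
    have hAM : A ⊆ M := by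
      rintro _ ⟨s, hs, rfl⟩
      refine interior_subset (hball ?_)
      rw [Metric.mem_ball]
      calc dist (s : S1) ((yt : ℝ) : S1) ≤ |s - yt| := dist_coe_le s yt
        _ < ε := abs_lt.mpr ⟨by linarith [hs.1], by linarith [hs.2]⟩
    have hyA : ((yt : ℝ) : S1) ∈ A := ⟨yt, ⟨by linarith, by linarith⟩, rfl⟩
    have hsubC : A ⊆ connectedComponentIn M ((yt : ℝ) : S1) :=
      hAconn.subset_connectedComponentIn hyA hAM
    have hcomp_eq : connectedComponentIn M x = connectedComponentIn M ((yt : ℝ) : S1) :=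
      connectedComponentIn_eq hyC
    have hmem : ((yt : ℝ) : S1) ∈ interior (connectedComponentIn M x) :=
      mem_interior.mpr ⟨A, hcomp_eq ▸ hsubC, hAopen, hyA⟩
    exact hyf.2 hmem
  have hPre : Preperfect F := by
    intro z hz
    by_cases hsub : (connectedComponentIn M z).Subsingleton
    · -- singleton component
      have hcz : connectedComponentIn M z = {z} :=
        hsub.eq_singleton_of_mem (mem_connectedComponentIn hz.1)
      rw [accPt_iff_nhds]
      intro U hU
      obtain ⟨ε, hε, hball⟩ := Metric.mem_nhds_iff.mp hU
      have hzcl : z ∈ closure (interior M) := hMclos ▸ hz.1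
      obtain ⟨x, hxM, hdx⟩ := Metric.mem_closure_iff.mp hzcl (ε / 2) (by positivity)
      obtain ⟨zt, hzt⟩ := QuotientAddGroup.mk_surjective z
      obtain ⟨t, htx, htd⟩ := exists_lift_eq_dist z x zt hzt
      have hxC : x ∈ connectedComponentIn M x := mem_connectedComponentIn (interior_subset hxM)
      have hzC : z ∉ connectedComponentIn M x := by
        intro hmem
        have h1 : connectedComponentIn M x = connectedComponentIn M z := connectedComponentIn_eq hmem
        rw [h1, hcz] at hxC
        exact hz.2 (hxC ▸ hxM)
      set A : Set S1 := (fun r : ℝ => (r : S1)) '' uIcc zt t with hA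
      have hAconn : IsPreconnected A := isPreconnected_uIcc.image _ continuous_coe.continuousOn
      have hzA : z ∈ A := ⟨zt, left_mem_uIcc, hzt⟩
      have hxA : x ∈ A := ⟨t, right_mem_uIcc, htx⟩
      obtain ⟨y, hyA, hyfr⟩ := preconn_inter_frontier hAconn ⟨x, hxA, hxC⟩ ⟨z, hzA, hzC⟩
      have hyF : y ∈ F := hFrontCF x (interior_subset hxM) hyfr
      have hyz : y ≠ z := by
        intro h
        apply hzC
        rw [← h, ← (hcompClosed x (interior_subset hxM)).closure_eq]
        exact hyfr.1
      refine ⟨y, ⟨hball ?_, hyF⟩, hyz⟩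
      obtain ⟨s, hs, rfl⟩ := hyA
      rw [Metric.mem_ball, ← hzt]
      calc dist ((s : ℝ) : S1) ((zt : ℝ) : S1) ≤ |s - zt| := dist_coe_le s zt
        _ ≤ |t - zt| := abs_sub_le_of_uIcc hs
        _ = dist z x := by rw [← htd, abs_sub_comm]
        _ < ε := by linarith
    · -- nontrivial component
      have hzfr : z ∈ frontier (connectedComponentIn M z) := by
        constructor
        · exact subset_closure (mem_connectedComponentIn hz.1)
        · intro h
          exact hz.2 (interior_mono (connectedComponentIn_subset M z) h)
      exact (hacc z hz.1 hsub z hzfr).mono (principal_mono.mpr hSsubF)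
  have hCantor : IsCantorSet F := by
    refine ⟨nonempty_iff_ne_empty.mpr hFem, hFclosed.isCompact, ⟨hFclosed, hPre⟩, ?_⟩
    exact totallyDisconnected_of_interior_empty hintF
  have hFK : F = K := hmax F hCantor hKMI subset_rfl
  apply eq_empty_of_subset_empty
  intro x hx
  by_cases hxi : x ∈ interior M
  · exact hx.2 (Or.inl hxi)
  · exact hx.2 (Or.inr (hFK ▸ ⟨hx.1, hxi⟩))
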